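/- Let m_1, m_2, m_3, m_4, M_1, M_2, M_3, M_4 ∈ SL(2,ℂ). Then det((tr(m_i · m_j))_{1≤i,j≤4}) · det((tr(M_i · M_j))_{1≤i,j≤4}) = (det((tr(m_i · M_j))_{1≤i,j≤4}))². -/
import Mathlib

def e4 : Fin 4 ≃ Fin 2 × Fin 2 where
  toFun := ![(0,0),(0,1),(1,0),(1,1)]
  invFun := fun p => ![![0,1],![2,3]] p.1 p.2
  left_inv := by decide
  right_inv := by decide

noncomputable def vecM (m : Fin 4 → Matrix.SpecialLinearGroup (Fin 2) ℂ) :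
    Matrix (Fin 4) (Fin 4) ℂ :=
  Matrix.of fun i j => (m i : Matrix (Fin 2) (Fin 2) ℂ) (e4 j).1 (e4 j).2

noncomputable def K4 : Matrix (Fin 4) (Fin 4) ℂ :=
  Matrix.of fun a b => if (e4 a).1 = (e4 b).2 ∧ (e4 a).2 = (e4 b).1 then 1 else 0

/-- The trace of a `2×2` matrix in `SL(2,ℂ)`. -/
noncomputable def tr2 (x : Matrix.SpecialLinearGroup (Fin 2) ℂ) : ℂ :=
  Matrix.trace (x : Matrix (Fin 2) (Fin 2) ℂ)

lemma gram_factor (m M : Fin 4 → Matrix.SpecialLinearGroup (Fin 2) ℂ) :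
    (Matrix.of fun i j : Fin 4 => tr2 (m i * M j)) = vecM m * K4 * (vecM M).transpose := by
  ext i j
  simp [tr2, Matrix.trace, Matrix.diag, Matrix.mul_apply, vecM, K4, e4,
    Fin.sum_univ_succ]
  ring

theorem magnus_second_identity (m M : Fin 4 → Matrix.SpecialLinearGroup (Fin 2) ℂ) :
    (Matrix.of fun i j : Fin 4 => tr2 (m i * m j)).det
        * (Matrix.of fun i j : Fin 4 => tr2 (M i * M j)).det
      = ((Matrix.of fun i j : Fin 4 => tr2 (m i * M j)).det) ^ 2 := by
  rw [gram_factor m m, gram_factor M M, gram_factor m M]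
  simp only [Matrix.det_mul, Matrix.det_transpose]
  ring
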